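/- Let Ẑ ∈ ℝ^{P×I}, ŷ ∈ ℝ^P, ŵ ∈ ℝ^I, M > 0, ε > 0, and set J(w) = (1/M)‖ŷ − Ẑw‖₂² and ê = ŷ − Ẑŵ. Then for every coordinate i, min over s ∈ {−ε, ε} of J(ŵ + s·e_i) equals (1/M)(‖ê‖₂² − ε·(2|⟨ê, Ẑe_i⟩| − ε‖Ẑe_i‖₂²)), and this minimum is attained at s = ε·sign(⟨ê, Ẑe_i⟩) whenever ⟨ê, Ẑe_i⟩ ≠ 0. Consequently, minimizing min_{s=±ε} J(ŵ + s·e_i) over coordinates i is equivalent to maximizing 2|⟨ê, Ẑe_i⟩| − ε‖Ẑe_i‖₂² over i. (Closed-form characterization of the forward step of SURF.) -/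

import Mathlib

/-- Closed-form characterization of the forward step of SURF. -/
theorem stmt_7 {P I : ℕ} (Zhat : Matrix (Fin P) (Fin I) ℝ) (yhat : Fin P → ℝ)
    (what : Fin I → ℝ) (M ε : ℝ) (hM : 0 < M) (hε : 0 < ε)
    (J : (Fin I → ℝ) → ℝ)
    (hJ : ∀ w, J w = (1 / M) * ∑ p, (yhat p - Zhat.mulVec w p) ^ 2)
    (ehat : Fin P → ℝ) (he : ehat = yhat - Zhat.mulVec what)
    (g : Fin I → ℝ)
    (hg : ∀ i, g i = ∑ p, ehat p * Zhat.mulVec ((Pi.single i 1 : Fin I → ℝ)) p)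
    (q : Fin I → ℝ)
    (hq : ∀ i, q i = ∑ p, (Zhat.mulVec ((Pi.single i 1 : Fin I → ℝ)) p) ^ 2) :
    (∀ i, min (J (what + ε • (Pi.single i 1 : Fin I → ℝ))) (J (what + (-ε) • (Pi.single i 1 : Fin I → ℝ)))
        = (1 / M) * (∑ p, (ehat p) ^ 2 - ε * (2 * |g i| - ε * q i)))
    ∧ (∀ i, g i ≠ 0 →
        J (what + (ε * Real.sign (g i)) • (Pi.single i 1 : Fin I → ℝ))
          = min (J (what + ε • (Pi.single i 1 : Fin I → ℝ))) (J (what + (-ε) • (Pi.single i 1 : Fin I → ℝ))))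
    ∧ (∀ i i',
        min (J (what + ε • (Pi.single i 1 : Fin I → ℝ))) (J (what + (-ε) • (Pi.single i 1 : Fin I → ℝ)))
          ≤ min (J (what + ε • (Pi.single i' 1 : Fin I → ℝ))) (J (what + (-ε) • (Pi.single i' 1 : Fin I → ℝ)))
        ↔ 2 * |g i'| - ε * q i' ≤ 2 * |g i| - ε * q i) := by
  have hMinv : (0:ℝ) < 1 / M := by positivity
  -- key expansion
  have key : ∀ (i : Fin I) (s : ℝ),
      J (what + s • (Pi.single i 1 : Fin I → ℝ))
        = (1 / M) * (∑ p, (ehat p) ^ 2 - 2 * s * g i + s ^ 2 * q i) := by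
    intro i s
    rw [hJ]
    congr 1
    have hpt : ∀ p, yhat p - Zhat.mulVec (what + s • (Pi.single i 1 : Fin I → ℝ)) p
        = ehat p - s * Zhat.mulVec (Pi.single i 1 : Fin I → ℝ) p := by
      intro p
      simp [he, Matrix.mulVec_add, Matrix.mulVec_smul]
      ring
    calc ∑ p, (yhat p - Zhat.mulVec (what + s • (Pi.single i 1 : Fin I → ℝ)) p) ^ 2
        = ∑ p, ((ehat p) ^ 2 - 2 * s * (ehat p * Zhat.mulVec (Pi.single i 1 : Fin I → ℝ) p)
            + s ^ 2 * (Zhat.mulVec (Pi.single i 1 : Fin I → ℝ) p) ^ 2) := by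
          refine Finset.sum_congr rfl fun p _ => ?_
          rw [hpt p]; ring
      _ = ∑ p, (ehat p) ^ 2 - 2 * s * g i + s ^ 2 * q i := by
          rw [hg, hq]
          rw [Finset.sum_add_distrib, Finset.sum_sub_distrib, ← Finset.mul_sum,
            ← Finset.mul_sum]
  -- part 1
  have part1 : ∀ i,
      min (J (what + ε • (Pi.single i 1 : Fin I → ℝ))) (J (what + (-ε) • (Pi.single i 1 : Fin I → ℝ)))
        = (1 / M) * (∑ p, (ehat p) ^ 2 - ε * (2 * |g i| - ε * q i)) := by
    intro i
    rw [key i ε, key i (-ε)]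
    rcases le_or_gt 0 (g i) with h | h
    · rw [abs_of_nonneg h, min_eq_left]
      · ring_nf
      · apply mul_le_mul_of_nonneg_left _ hMinv.le
        nlinarith
    · rw [abs_of_neg h, min_eq_right]
      · ring_nf
      · apply mul_le_mul_of_nonneg_left _ hMinv.le
        nlinarith
  refine ⟨part1, fun i hgi => ?_, fun i i' => ?_⟩
  · rcases hgi.lt_or_gt with h | h
    · rw [Real.sign_of_neg h, part1 i, abs_of_neg h, key]
      ring_nf
    · rw [Real.sign_of_pos h, part1 i, abs_of_pos h, key]
      ring_nf
  · rw [part1 i, part1 i', mul_le_mul_iff_right₀ hMinv, sub_le_sub_iff_left,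
      mul_le_mul_iff_right₀ hε]
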